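/- Let R be a ring, n ≥ 1 an integer, and 𝒳 a class of left R-modules. Every special 𝒳-pure submodule of an n-𝒳-injective left R-module is n-𝒳-injective. In particular, every special 𝒳-pure submodule of an injective left R-module is n-𝒳-injective. -/

import Mathlib

/- Common framework: `n`-presented modules, syzygies, special 𝒳-presented modules,
   Ext/Tor vanishing (Tor via a hand-rolled tensor product over a possibly
   noncommutative ring, since Mathlib's tensor product requires commutativity),
   `n`-𝒳-injective / `n`-𝒳-flat modules, and the Gorenstein versions. -/

universe u
open CategoryTheory LinearMap DirectSum

section Basic

variable (R : Type u) [Ring R]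

/-- `U` is an `n`-presented left `R`-module: there is an exact sequence
`F_n → ⋯ → F_0 → U → 0` with each `F_i` finitely generated free. -/
def IsNPresented : ℕ → ModuleCat.{u} R → Prop
  | 0, U => Module.Finite R U
  | n + 1, U => ∃ (F : ModuleCat.{u} R) (f : F →ₗ[R] U),
      Module.Free R F ∧ Module.Finite R F ∧ Function.Surjective f ∧
      IsNPresented n (ModuleCat.of R (LinearMap.ker f))

/-- `K` is a `j`-th syzygy of `U` computed from finitely generated free modules:
`IsSyzygy 0 U K` iff `K ≅ U`, and a `(j+1)`-st syzygy of `U` is a `j`-th syzygy of the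
kernel of a surjection from a finitely generated free module onto `U`. -/
def IsSyzygy : ℕ → ModuleCat.{u} R → ModuleCat.{u} R → Prop
  | 0, U, K => Nonempty (K ≃ₗ[R] U)
  | j + 1, U, K => ∃ (F : ModuleCat.{u} R) (f : F →ₗ[R] U),
      Module.Free R F ∧ Module.Finite R F ∧ Function.Surjective f ∧
      IsSyzygy j (ModuleCat.of R (LinearMap.ker f)) K

/-- `Ext_R^k(U, M) = 0`. -/
noncomputable def ExtVanishes (k : ℕ) (U M : ModuleCat.{u} R) : Prop :=
  Subsingleton (((Ext ℤ (ModuleCat.{u} R) k).obj (Opposite.op U)).obj M)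

variable (𝒳 : Set (ModuleCat.{u} R)) (n : ℕ)

/-- `K` is a special 𝒳-presented module: `K` is the image `K_{n-1} = Im(F_{n-1} → F_{n-2})`
arising from an `n`-presentation of some `U ∈ 𝒳` (with the convention `K = U` when `n = 1`),
i.e. `K` is an `(n-1)`-st syzygy of some `n`-presented `U ∈ 𝒳`. -/
def IsSpecialPresented (K : ModuleCat.{u} R) : Prop :=
  ∃ U ∈ 𝒳, IsNPresented R n U ∧ IsSyzygy R (n - 1) U K

/-- `M` is an `n`-𝒳-injective left `R`-module: `Ext_R^n(U, M) = 0` for every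
`n`-presented `U ∈ 𝒳`. -/
noncomputable def IsNXInjective (M : ModuleCat.{u} R) : Prop :=
  ∀ U ∈ 𝒳, IsNPresented R n U → ExtVanishes R n U M

/-- Projective dimension at most `m`. -/
def ProjDimLE : ℕ → ModuleCat.{u} R → Prop
  | 0, K => Module.Projective R K
  | m + 1, K => ∃ (P : ModuleCat.{u} R) (f : P →ₗ[R] K),
      Module.Projective R P ∧ Function.Surjective f ∧
      ProjDimLE m (ModuleCat.of R (LinearMap.ker f))

/-- Finite projective dimension. -/
def HasFiniteProjDim (K : ModuleCat.{u} R) : Prop := ∃ m, ProjDimLE R m K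

/-- `R` is left `n`-𝒳-coherent: every `n`-presented module in `𝒳` is `(n+1)`-presented. -/
def IsNXCoherent : Prop := ∀ U ∈ 𝒳, IsNPresented R n U → IsNPresented R (n + 1) U

/-- `M` has `n`-𝒳-injective dimension at most `m`:
`Ext_R^{n+i}(U, M) = 0` for all `i ≥ m + 1` and all `n`-presented `U ∈ 𝒳`. -/
noncomputable def NXInjDimLE (m : ℕ) (M : ModuleCat.{u} R) : Prop :=
  ∀ U ∈ 𝒳, IsNPresented R n U → ∀ i : ℕ, m + 1 ≤ i → ExtVanishes R (n + i) U M

/-- `M` has finite `n`-𝒳-injective dimension. -/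
noncomputable def HasFiniteNXInjDim (M : ModuleCat.{u} R) : Prop := ∃ m, NXInjDimLE R 𝒳 n m M

end Basic

section Tensor

variable (R : Type u) [Ring R]

/-- The defining relations of the tensor product `N ⊗_R U` of a right `R`-module `N`
with a left `R`-module `U`, inside `N ⊗_ℤ U`. -/
def tensorRel (N : Type u) [AddCommGroup N] [Module Rᵐᵒᵖ N]
    (U : Type u) [AddCommGroup U] [Module R U] : Submodule ℤ (TensorProduct ℤ N U) :=
  Submodule.span ℤ {x | ∃ (r : R) (a : N) (v : U),
    x = (MulOpposite.op r • a) ⊗ₜ[ℤ] v - a ⊗ₜ[ℤ] (r • v)}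

/-- The tensor product `N ⊗_R U` of a right `R`-module `N` with a left `R`-module `U`
over a (possibly noncommutative) ring `R`, as an abelian group. -/
abbrev RTensor (N : Type u) [AddCommGroup N] [Module Rᵐᵒᵖ N]
    (U : Type u) [AddCommGroup U] [Module R U] : Type u :=
  TensorProduct ℤ N U ⧸ tensorRel R N U

/-- Functoriality of `RTensor` in both variables. -/
noncomputable def rtmap {N N' : Type u} [AddCommGroup N] [Module Rᵐᵒᵖ N]
    [AddCommGroup N'] [Module Rᵐᵒᵖ N']
    {U U' : Type u} [AddCommGroup U] [Module R U] [AddCommGroup U'] [Module R U']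
    (g : N →ₗ[Rᵐᵒᵖ] N') (f : U →ₗ[R] U') :
    RTensor R N U →ₗ[ℤ] RTensor R N' U' :=
  Submodule.mapQ (tensorRel R N U) (tensorRel R N' U')
    (TensorProduct.map g.toAddMonoidHom.toIntLinearMap f.toAddMonoidHom.toIntLinearMap)
    (by
      rw [tensorRel, Submodule.span_le]
      rintro x ⟨r, a, v, rfl⟩
      simp only [SetLike.mem_coe, Submodule.mem_comap, map_sub, TensorProduct.map_tmul,
        AddMonoidHom.coe_toIntLinearMap, LinearMap.toAddMonoidHom_coe]
      apply Submodule.subset_span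
      exact ⟨r, g a, f v, by
        erw [map_sub, TensorProduct.map_tmul, TensorProduct.map_tmul]
        simp [map_smul]⟩)

/-- A left `R`-module `M` is flat if `- ⊗_R M` preserves injections of right `R`-modules. -/
noncomputable def IsFlatModule (M : ModuleCat.{u} R) : Prop :=
  ∀ (A B : ModuleCat.{u} Rᵐᵒᵖ) (i : A →ₗ[Rᵐᵒᵖ] B), Function.Injective i →
    Function.Injective (rtmap R i (LinearMap.id (M := M)))

/-- A right `R`-module `N` is flat if `N ⊗_R -` preserves injections of left `R`-modules. -/
noncomputable def IsFlatRight (N : ModuleCat.{u} Rᵐᵒᵖ) : Prop :=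
  ∀ (A B : ModuleCat.{u} R) (i : A →ₗ[R] B), Function.Injective i →
    Function.Injective (rtmap R (LinearMap.id (M := N)) i)

/-- Flat dimension of a left `R`-module at most `m`. -/
noncomputable def FlatDimLE : ℕ → ModuleCat.{u} R → Prop
  | 0, K => IsFlatModule R K
  | m + 1, K => ∃ (P : ModuleCat.{u} R) (f : P →ₗ[R] K),
      IsFlatModule R P ∧ Function.Surjective f ∧
      FlatDimLE m (ModuleCat.of R (LinearMap.ker f))

/-- Finite flat dimension. -/
noncomputable def HasFiniteFlatDim (K : ModuleCat.{u} R) : Prop := ∃ m, FlatDimLE R m K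

variable (𝒳 : Set (ModuleCat.{u} R)) (n : ℕ)

/-- `Tor^R_k(N, U) = 0` for a right `R`-module `N` and a left `R`-module `U`, `k ≥ 1`:
by dimension shifting this says that for every `(k-1)`-st syzygy `K` of `U` and every
surjection `f : F → K` with `F` free, the induced map `N ⊗ ker f → N ⊗ F` is injective. -/
noncomputable def TorVanishes (k : ℕ) (N : ModuleCat.{u} Rᵐᵒᵖ) (U : ModuleCat.{u} R) : Prop :=
  ∀ (K : ModuleCat.{u} R), IsSyzygy R (k - 1) U K →
    ∀ (F : ModuleCat.{u} R) (f : F →ₗ[R] K), Module.Free R F → Function.Surjective f →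
      Function.Injective
        (rtmap R (LinearMap.id (M := N)) (LinearMap.ker f).subtype)

/-- `N` is an `n`-𝒳-flat right `R`-module: `Tor^R_n(N, U) = 0` for every
`n`-presented `U ∈ 𝒳`. -/
noncomputable def IsNXFlat (N : ModuleCat.{u} Rᵐᵒᵖ) : Prop :=
  ∀ U ∈ 𝒳, IsNPresented R n U → TorVanishes R n N U

/-- `N` has `n`-𝒳-flat dimension at most `m`:
`Tor^R_{n+i}(N, U) = 0` for all `i ≥ m + 1` and all `n`-presented `U ∈ 𝒳`. -/
noncomputable def NXFlatDimLE (m : ℕ) (N : ModuleCat.{u} Rᵐᵒᵖ) : Prop :=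
  ∀ U ∈ 𝒳, IsNPresented R n U → ∀ i : ℕ, m + 1 ≤ i → TorVanishes R (n + i) N U

/-- `N` has finite `n`-𝒳-flat dimension. -/
noncomputable def HasFiniteNXFlatDim (N : ModuleCat.{u} Rᵐᵒᵖ) : Prop := ∃ m, NXFlatDimLE R 𝒳 n m N

end Tensor

section Pure

variable (R : Type u) [Ring R] (𝒳 : Set (ModuleCat.{u} R)) (n : ℕ)

/-- A short exact sequence `0 → A → B → C → 0` of left `R`-modules (given by `i` and `p`)
is special 𝒳-pure if `0 → Hom(K, A) → Hom(K, B) → Hom(K, C) → 0` is exact for every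
special 𝒳-presented module `K`. -/
def IsSpecialXPure {A B C : Type u} [AddCommGroup A] [Module R A] [AddCommGroup B] [Module R B]
    [AddCommGroup C] [Module R C] (i : A →ₗ[R] B) (p : B →ₗ[R] C) : Prop :=
  ∀ K : ModuleCat.{u} R, IsSpecialPresented R 𝒳 n K →
    Function.Injective (fun g : K →ₗ[R] A => i.comp g) ∧
    Function.Exact (fun g : K →ₗ[R] A => i.comp g) (fun g : K →ₗ[R] B => p.comp g) ∧
    Function.Surjective (fun g : K →ₗ[R] B => p.comp g)

/-- A short exact sequence `0 → A → B → C → 0` of right `R`-modules (given by `i` and `p`)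
is special 𝒳-pure if `0 → A ⊗ K → B ⊗ K → C ⊗ K → 0` is exact for every special
𝒳-presented (left `R`-) module `K`. -/
noncomputable def IsSpecialXPureRight {A B C : Type u}
    [AddCommGroup A] [Module Rᵐᵒᵖ A] [AddCommGroup B] [Module Rᵐᵒᵖ B]
    [AddCommGroup C] [Module Rᵐᵒᵖ C] (i : A →ₗ[Rᵐᵒᵖ] B) (p : B →ₗ[Rᵐᵒᵖ] C) : Prop :=
  ∀ K : ModuleCat.{u} R, IsSpecialPresented R 𝒳 n K →
    Function.Injective (rtmap R i (LinearMap.id (M := K))) ∧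
    Function.Exact (rtmap R i (LinearMap.id (M := K))) (rtmap R p (LinearMap.id (M := K))) ∧
    Function.Surjective (rtmap R p (LinearMap.id (M := K)))

/-- `R` is self left `n`-𝒳-injective. -/
noncomputable def IsSelfNXInjective : Prop := IsNXInjective R 𝒳 n (ModuleCat.of R R)

end Pure

section Gorenstein

variable (R : Type u) [Ring R] (𝒳 : Set (ModuleCat.{u} R)) (n : ℕ)

/-- `G` is a Gorenstein `n`-𝒳-injective left `R`-module: there is an exact complex
`⋯ → A_1 → A_0 → A^0 → A^1 → ⋯` of `n`-𝒳-injective modules with `G = ker(A^0 → A^1)`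
which stays exact under `Hom_R(K, -)` for every special 𝒳-presented `K` of finite
projective dimension. -/
noncomputable def IsGorNXInjective (G : ModuleCat.{u} R) : Prop :=
  ∃ (C : ℤ → ModuleCat.{u} R) (d : ∀ i : ℤ, C i →ₗ[R] C (i - 1)),
    (∀ i, IsNXInjective R 𝒳 n (C i)) ∧
    (∀ i : ℤ, Function.Exact (d i) (d (i - 1))) ∧
    Nonempty (G ≃ₗ[R] LinearMap.ker (d 0)) ∧
    (∀ K : ModuleCat.{u} R, IsSpecialPresented R 𝒳 n K → HasFiniteProjDim R K →
      ∀ i : ℤ, Function.Exact (fun g : K →ₗ[R] C i => (d i).comp g)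
        (fun g : K →ₗ[R] C (i - 1) => (d (i - 1)).comp g))

/-- `G` is a Gorenstein `n`-𝒳-flat right `R`-module: there is an exact complex
`⋯ → F_1 → F_0 → F^0 → F^1 → ⋯` of `n`-𝒳-flat right modules with `G = ker(F^0 → F^1)`
which stays exact under `- ⊗_R K` for every special 𝒳-presented `K` of finite
flat dimension. -/
noncomputable def IsGorNXFlat (G : ModuleCat.{u} Rᵐᵒᵖ) : Prop :=
  ∃ (C : ℤ → ModuleCat.{u} Rᵐᵒᵖ) (d : ∀ i : ℤ, C i →ₗ[Rᵐᵒᵖ] C (i - 1)),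
    (∀ i, IsNXFlat R 𝒳 n (C i)) ∧
    (∀ i : ℤ, Function.Exact (d i) (d (i - 1))) ∧
    Nonempty (G ≃ₗ[Rᵐᵒᵖ] LinearMap.ker (d 0)) ∧
    (∀ K : ModuleCat.{u} R, IsSpecialPresented R 𝒳 n K → HasFiniteFlatDim R K →
      ∀ i : ℤ, Function.Exact (rtmap R (d i) (LinearMap.id (M := K)))
        (rtmap R (d (i - 1)) (LinearMap.id (M := K))))

end Gorenstein

section GorensteinAbsolute

/-- `G` is a Gorenstein injective module over `S`: there is an exact complex of injective
modules with `G = ker(E^0 → E^1)` which stays exact under `Hom(I, -)` for every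
injective module `I`. -/
noncomputable def IsGorensteinInjective (S : Type u) [Ring S] (G : ModuleCat.{u} S) : Prop :=
  ∃ (C : ℤ → ModuleCat.{u} S) (d : ∀ i : ℤ, C i →ₗ[S] C (i - 1)),
    (∀ i, Module.Injective S (C i)) ∧
    (∀ i : ℤ, Function.Exact (d i) (d (i - 1))) ∧
    Nonempty (G ≃ₗ[S] LinearMap.ker (d 0)) ∧
    (∀ I : ModuleCat.{u} S, Module.Injective S I →
      ∀ i : ℤ, Function.Exact (fun g : I →ₗ[S] C i => (d i).comp g)
        (fun g : I →ₗ[S] C (i - 1) => (d (i - 1)).comp g))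

/-- `G` is a Gorenstein projective module over `S`: there is an exact complex of projective
modules with `G = ker(P^0 → P^1)` which stays exact under `Hom(-, Q)` for every
projective module `Q`. -/
def IsGorensteinProjective (S : Type u) [Ring S] (G : ModuleCat.{u} S) : Prop :=
  ∃ (C : ℤ → ModuleCat.{u} S) (d : ∀ i : ℤ, C i →ₗ[S] C (i - 1)),
    (∀ i, Module.Projective S (C i)) ∧
    (∀ i : ℤ, Function.Exact (d i) (d (i - 1))) ∧
    Nonempty (G ≃ₗ[S] LinearMap.ker (d 0)) ∧
    (∀ Q : ModuleCat.{u} S, Module.Projective S Q →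
      ∀ i : ℤ, Function.Exact (fun g : C (i - 1 - 1) →ₗ[S] Q => g.comp (d (i - 1)))
        (fun g : C (i - 1) →ₗ[S] Q => g.comp (d i)))

variable (R : Type u) [Ring R]

/-- `G` is a Gorenstein flat left `R`-module: there is an exact complex of flat left modules
with `G = ker(F^0 → F^1)` which stays exact under `E ⊗_R -` for every injective right
`R`-module `E`. -/
noncomputable def IsGorensteinFlatLeft (G : ModuleCat.{u} R) : Prop :=
  ∃ (C : ℤ → ModuleCat.{u} R) (d : ∀ i : ℤ, C i →ₗ[R] C (i - 1)),
    (∀ i, IsFlatModule R (C i)) ∧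
    (∀ i : ℤ, Function.Exact (d i) (d (i - 1))) ∧
    Nonempty (G ≃ₗ[R] LinearMap.ker (d 0)) ∧
    (∀ E : ModuleCat.{u} Rᵐᵒᵖ, Module.Injective Rᵐᵒᵖ E →
      ∀ i : ℤ, Function.Exact (rtmap R (LinearMap.id (M := E)) (d i))
        (rtmap R (LinearMap.id (M := E)) (d (i - 1))))

/-- `G` is a Gorenstein flat right `R`-module: there is an exact complex of flat right modules
with `G = ker(F^0 → F^1)` which stays exact under `- ⊗_R E` for every injective left
`R`-module `E`. -/
noncomputable def IsGorensteinFlatRight (G : ModuleCat.{u} Rᵐᵒᵖ) : Prop :=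
  ∃ (C : ℤ → ModuleCat.{u} Rᵐᵒᵖ) (d : ∀ i : ℤ, C i →ₗ[Rᵐᵒᵖ] C (i - 1)),
    (∀ i, IsFlatRight R (C i)) ∧
    (∀ i : ℤ, Function.Exact (d i) (d (i - 1))) ∧
    Nonempty (G ≃ₗ[Rᵐᵒᵖ] LinearMap.ker (d 0)) ∧
    (∀ E : ModuleCat.{u} R, Module.Injective R E →
      ∀ i : ℤ, Function.Exact (rtmap R (d i) (LinearMap.id (M := E)))
        (rtmap R (d (i - 1)) (LinearMap.id (M := E))))

end GorensteinAbsolute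

/-! ### Auxiliary material for the proof of `statement_2` -/

noncomputable section StAux
open CategoryTheory Limits
variable {R : Type u} [Ring R]

variable {W F : ModuleCat.{u} R}

/-- The kernel of a morphism of modules, as an object of `ModuleCat`. -/
abbrev kerM (f : F ⟶ W) : ModuleCat.{u} R := ModuleCat.of R (LinearMap.ker f.hom)

/-- The inclusion of the kernel. -/
def inclM (f : F ⟶ W) : kerM f ⟶ F := ModuleCat.ofHom (LinearMap.ker f.hom).subtype

/-- A chosen projective resolution of the kernel. -/
abbrev auxP (f : F ⟶ W) : ProjectiveResolution (kerM f) := projectiveResolution _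

/-- The objects of a projective resolution of `W` obtained by splicing `F` with a
resolution of `ker f`. -/
def auxX (f : F ⟶ W) : ℕ → ModuleCat.{u} R
  | 0 => F
  | (j+1) => (auxP f).complex.X j

/-- The differentials of the spliced resolution. -/
def auxD (f : F ⟶ W) : ∀ n, auxX f (n+1) ⟶ auxX f n
  | 0 => (auxP f).π.f 0 ≫ inclM f
  | (j+1) => (auxP f).complex.d (j+1) j

lemma auxSq (f : F ⟶ W) : ∀ n, auxD f (n+1) ≫ auxD f n = 0
  | 0 => by
      show (auxP f).complex.d 1 0 ≫ ((auxP f).π.f 0 ≫ inclM f) = 0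
      exact ((auxP f).complex_d_comp_π_f_zero_assoc _).trans Limits.zero_comp
  | (j+1) => (auxP f).complex.d_comp_d _ _ _

/-- The spliced chain complex. -/
def auxQ (f : F ⟶ W) : ChainComplex (ModuleCat.{u} R) ℕ :=
  ChainComplex.of (auxX f) (auxD f) (auxSq f)

lemma auxQ_d (f : F ⟶ W) (n : ℕ) : (auxQ f).d (n+1) n = auxD f n :=
  ChainComplex.of_d _ _ _

lemma auxQ_d10 (f : F ⟶ W) : (auxQ f).d 1 0 ≫ (f : F ⟶ W) = 0 := by
  rw [auxQ_d]
  show ((auxP f).π.f 0 ≫ inclM f) ≫ f = 0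
  refine (Category.assoc _ _ _).trans ?_
  have : inclM f ≫ f = 0 := ModuleCat.hom_ext (LinearMap.ext fun x => x.2)
  exact (congrArg (fun t => (auxP f).π.f 0 ≫ t) this).trans (Limits.comp_zero)

lemma auxQ_exactAt_succ (f : F ⟶ W) (n : ℕ) : (auxQ f).ExactAt (n+1) := by
  rw [HomologicalComplex.exactAt_iff' _ (n+2) (n+1) n (by simp) (by simp)]
  rw [ShortComplex.moduleCat_exact_iff]
  match n with
  | 0 =>
    intro x hx
    have hx' : (inclM f) ((auxP f).π.f 0 x) = 0 := by
      simp only [auxQ_d, auxD] at hx; exact hx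
    have hx0 : (auxP f).π.f 0 x = 0 := Subtype.ext hx'
    have := (auxP f).exact₀
    rw [ShortComplex.moduleCat_exact_iff] at this
    obtain ⟨y, hy⟩ := this x hx0
    exact ⟨y, by simp [auxQ_d, auxD]; exact hy⟩
  | (m+1) =>
    intro x hx
    have := (auxP f).complex_exactAt_succ m
    rw [HomologicalComplex.exactAt_iff' _ (m+2) (m+1) m (by simp) (by simp),
      ShortComplex.moduleCat_exact_iff] at this
    obtain ⟨y, hy⟩ := this x (by simp [auxQ_d, auxD] at hx ⊢; exact hx)
    exact ⟨y, by simp [auxQ_d, auxD] at hy ⊢; exact hy⟩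

/-- The spliced projective resolution of `W`. -/
def auxRes (f : F ⟶ W) [Projective F] (hf : Function.Surjective f) :
    ProjectiveResolution W where
  complex := auxQ f
  projective := fun n => by
    match n with
    | 0 => exact (inferInstance : Projective F)
    | (j+1) => exact (auxP f).projective j
  π := (ChainComplex.toSingle₀Equiv _ _).symm ⟨f, auxQ_d10 f⟩
  quasiIso := ⟨fun n => by
    cases n with
    | zero =>
      rw [ChainComplex.quasiIsoAt₀_iff, ShortComplex.quasiIso_iff_of_zeros']
      · constructor
        · rw [ShortComplex.moduleCat_exact_iff]
          intro (x : F) hx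
          have hx' : f x = 0 := by
            exact hx
          have hπ : Function.Surjective ((auxP f).π.f 0) :=
            (ModuleCat.epi_iff_surjective _).1 inferInstance
          obtain ⟨y, hy⟩ := hπ (⟨x, hx'⟩ : LinearMap.ker f.hom)
          refine ⟨y, ?_⟩
          show ((auxQ f).d 1 0) y = x
          rw [auxQ_d]
          show (inclM f) ((auxP f).π.f 0 y) = x
          rw [hy]
          rfl
        · rw [ModuleCat.epi_iff_surjective]
          intro x
          obtain ⟨y, hy⟩ := hf x
          exact ⟨y, hy⟩
      · rfl
      · rfl
      · rfl
    | succ n =>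
      rw [quasiIsoAt_iff_exactAt']
      · exact auxQ_exactAt_succ f n
      · apply ChainComplex.exactAt_succ_single_obj⟩

universe v' u' in
lemma isZero_iff_subsingleton {S : Type u'} [Ring S] (M : ModuleCat.{v'} S) :
    IsZero M ↔ Subsingleton M := by
  constructor
  · intro h
    have hid : (𝟙 M : M ⟶ M) = 0 := h.eq_of_src _ _
    refine ⟨fun a b => ?_⟩
    have ha : a = (𝟙 M : M ⟶ M) a := rfl
    have hb : b = (𝟙 M : M ⟶ M) b := rfl
    rw [ha, hb, hid]
    rfl
  · intro h
    exact ModuleCat.isZero_of_subsingleton M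

lemma extVanishes_iff_exactAt (W M : ModuleCat.{u} R) (P : ProjectiveResolution W) (m : ℕ) :
    ExtVanishes R m W M ↔ (P.complex.linearYonedaObj ℤ M).ExactAt m := by
  rw [ExtVanishes, HomologicalComplex.exactAt_iff_isZero_homology,
    ← isZero_iff_subsingleton]
  constructor
  · intro h
    exact h.of_iso (P.isoExt m M).symm
  · intro h
    exact h.of_iso (P.isoExt m M)

lemma linYon_exactAt_iff (Q : ChainComplex (ModuleCat.{u} R) ℕ) (M : ModuleCat.{u} R) (j : ℕ) :
    (Q.linearYonedaObj ℤ M).ExactAt (j+1) ↔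
      ∀ (g : Q.X (j+1) ⟶ M), Q.d (j+2) (j+1) ≫ g = 0 →
        ∃ h : Q.X j ⟶ M, Q.d (j+1) j ≫ h = g := by
  rw [HomologicalComplex.exactAt_iff' _ j (j+1) (j+2) (by simp) (by simp),
    ShortComplex.moduleCat_exact_iff]
  constructor
  · intro H g hg
    obtain ⟨h, hh⟩ := H g hg
    exact ⟨h, hh⟩
  · intro H g hg
    obtain ⟨h, hh⟩ := H g hg
    exact ⟨h, hh⟩

lemma auxRes_complex (f : F ⟶ W) [Projective F] (hf : Function.Surjective f) :
    (auxRes f hf).complex = auxQ f := rfl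

lemma shiftE (f : F ⟶ W) [Projective F] (hf : Function.Surjective f) (m : ℕ)
    (M : ModuleCat.{u} R) :
    ExtVanishes R (m+2) W M ↔ ExtVanishes R (m+1) (kerM f) M := by
  rw [extVanishes_iff_exactAt W M (auxRes f hf), auxRes_complex,
      extVanishes_iff_exactAt (kerM f) M (auxP f),
      linYon_exactAt_iff, linYon_exactAt_iff]
  simp only [auxQ_d]
  exact Iff.rfl

lemma ext1_iff (f : F ⟶ W) [Projective F] (hf : Function.Surjective f) (M : ModuleCat.{u} R) :
    ExtVanishes R 1 W M ↔
      ∀ φ : (LinearMap.ker f.hom) →ₗ[R] M, ∃ ψ : F →ₗ[R] M,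
        ∀ x : LinearMap.ker f.hom, ψ x.1 = φ x := by
  rw [extVanishes_iff_exactAt W M (auxRes f hf), auxRes_complex,
      show (1 : ℕ) = 0 + 1 from rfl, linYon_exactAt_iff]
  simp only [auxQ_d]
  constructor
  · intro H φ
    have hg : (auxD f 1) ≫ ((auxP f).π.f 0 ≫ ModuleCat.ofHom φ) = 0 := by
      show (auxP f).complex.d 1 0 ≫ _ = 0
      exact ((auxP f).complex_d_comp_π_f_zero_assoc _).trans Limits.zero_comp
    obtain ⟨h, hh⟩ := H _ hg
    refine ⟨h.hom, fun x => ?_⟩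
    have h2 : inclM f ≫ h = ModuleCat.ofHom φ := by
      have hh' : (auxP f).π.f 0 ≫ (inclM f ≫ h) = (auxP f).π.f 0 ≫ ModuleCat.ofHom φ :=
        (Category.assoc _ _ _).symm.trans hh
      exact (cancel_epi ((auxP f).π.f 0)).1 hh'
    exact LinearMap.congr_fun (congrArg ModuleCat.Hom.hom h2) x
  · intro H g hg
    let π0 : ((auxP f).complex.X 0 : Type u) →ₗ[R] (LinearMap.ker f.hom) := ((auxP f).π.f 0).hom
    have hπ : Function.Surjective π0 :=
      (ModuleCat.epi_iff_surjective ((auxP f).π.f 0)).1 inferInstance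
    have hle : LinearMap.ker π0 ≤ LinearMap.ker g.hom := by
      intro y hy
      have hy' : (auxP f).π.f 0 y = 0 := hy
      have hex := (auxP f).exact₀
      rw [ShortComplex.moduleCat_exact_iff] at hex
      obtain ⟨z, hz⟩ := hex y hy'
      have : g ((auxP f).complex.d 1 0 z) = 0 := LinearMap.congr_fun (congrArg ModuleCat.Hom.hom hg) z
      exact (by simpa [hz] using this : g y = 0)
    set e := LinearMap.quotKerEquivOfSurjective π0 hπ with he
    set φ : (LinearMap.ker f.hom : Type u) →ₗ[R] M :=
      ((LinearMap.ker π0).liftQ g.hom hle) ∘ₗ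
        (e.symm : (LinearMap.ker f.hom : Type u) →ₗ[R] _) with hφ
    have hkey : ∀ y, φ (π0 y) = g y := by
      intro y
      have h1 : e (Submodule.Quotient.mk y) = π0 y := by
        simp [he, LinearMap.quotKerEquivOfSurjective]
      have h2 : e.symm (π0 y) = Submodule.Quotient.mk y := by
        rw [← h1, LinearEquiv.symm_apply_apply]
      rw [hφ]
      simp only [LinearMap.comp_apply, LinearEquiv.coe_coe, h2]
      exact Submodule.liftQ_apply _ _ _
    obtain ⟨ψ, hψ⟩ := H φ
    refine ⟨ModuleCat.ofHom ψ, ?_⟩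
    apply ModuleCat.hom_ext
    apply LinearMap.ext
    intro y
    show ψ ((inclM f) ((auxP f).π.f 0 y)) = g y
    rw [show (inclM f) ((auxP f).π.f 0 y) = (π0 y : F) from rfl]
    rw [hψ (π0 y)]
    exact hkey y

lemma projective_of_free' (F : ModuleCat.{u} R) (h : Module.Free R F) : Projective F := by
  haveI := h
  exact ModuleCat.projective_of_free (Module.Free.chooseBasis R F)

lemma main_ext_char : ∀ (n : ℕ) (U : ModuleCat.{u} R), IsNPresented R (n+1) U →
    ∃ (K F : ModuleCat.{u} R) (f : F ⟶ K),
      IsSyzygy R n U K ∧ Function.Surjective f ∧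
      ∀ M : ModuleCat.{u} R, (ExtVanishes R (n+1) U M ↔
        ∀ φ : (LinearMap.ker f.hom) →ₗ[R] M, ∃ ψ : F →ₗ[R] M,
          ∀ x : LinearMap.ker f.hom, ψ x.1 = φ x) := by
  intro n
  induction n with
  | zero =>
    rintro U ⟨F, f, hfree, _, hsurj, _⟩
    haveI := projective_of_free' F hfree
    exact ⟨U, F, ModuleCat.ofHom f, ⟨LinearEquiv.refl R U⟩, hsurj, fun M => ext1_iff (ModuleCat.ofHom f) hsurj M⟩
  | succ n ih =>
    rintro U ⟨F₀, f₀, hfree₀, hfin₀, hsurj₀, hpres⟩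
    obtain ⟨K, F, f, hsyz, hsurj, hchar⟩ := ih (ModuleCat.of R (LinearMap.ker f₀)) hpres
    haveI := projective_of_free' F₀ hfree₀
    refine ⟨K, F, f, ⟨F₀, f₀, hfree₀, hfin₀, hsurj₀, hsyz⟩, hsurj, fun M => ?_⟩
    rw [shiftE (ModuleCat.ofHom f₀) hsurj₀ n M]
    exact hchar M

end StAux
/-- every special 𝒳-pure submodule of an `n`-𝒳-injective left `R`-module is
`n`-𝒳-injective; in particular, every special 𝒳-pure submodule of an injective left
`R`-module is `n`-𝒳-injective. -/
theorem statement_2 (R : Type u) [Ring R] (𝒳 : Set (ModuleCat.{u} R)) (n : ℕ) (hn : 1 ≤ n) :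
    (∀ (B : ModuleCat.{u} R) (A : Submodule R B), IsNXInjective R 𝒳 n B →
      IsSpecialXPure R 𝒳 n A.subtype A.mkQ → IsNXInjective R 𝒳 n (ModuleCat.of R A)) ∧
    (∀ (B : ModuleCat.{u} R) (A : Submodule R B), Module.Injective R B →
      IsSpecialXPure R 𝒳 n A.subtype A.mkQ → IsNXInjective R 𝒳 n (ModuleCat.of R A)) := by
  have part1 : ∀ (B : ModuleCat.{u} R) (A : Submodule R B), IsNXInjective R 𝒳 n B →
      IsSpecialXPure R 𝒳 n A.subtype A.mkQ → IsNXInjective R 𝒳 n (ModuleCat.of R A) := by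
    intro B A hB hpure U hU hUpres
    obtain ⟨n', rfl⟩ : ∃ n', n = n' + 1 := ⟨n - 1, (Nat.succ_pred_eq_of_pos hn).symm⟩
    obtain ⟨K, F, f, hsyz, hsurj, hchar⟩ := main_ext_char n' U hUpres
    have hKspec : IsSpecialPresented R 𝒳 (n' + 1) K :=
      ⟨U, hU, hUpres, by simpa using hsyz⟩
    rw [hchar (ModuleCat.of R A)]
    intro φ
    obtain ⟨ψ, hψ⟩ := (hchar B).1 (hB U hU hUpres) (A.subtype ∘ₗ φ)
    have hle : ∀ y ∈ LinearMap.ker f.hom, (A.mkQ ∘ₗ (ψ : F →ₗ[R] B)) y = 0 := by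
      intro y hy
      show A.mkQ (ψ y) = 0
      have h1 : ψ y = A.subtype (φ ⟨y, hy⟩) := hψ ⟨y, hy⟩
      rw [h1]
      exact (Submodule.Quotient.mk_eq_zero A).2 (φ ⟨y, hy⟩).2
    set e := LinearMap.quotKerEquivOfSurjective f.hom hsurj with he
    set χ := ((LinearMap.ker f.hom).liftQ (A.mkQ ∘ₗ (ψ : F →ₗ[R] B)) hle) ∘ₗ
      e.symm.toLinearMap with hχdef
    obtain ⟨χ', hχ'⟩ := (hpure K hKspec).2.2 χ
    have hekey : ∀ y : F, e.symm (f y) = Submodule.Quotient.mk y := by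
      intro y
      have h1 : e (Submodule.Quotient.mk y) = f y := by
        simp [he, LinearMap.quotKerEquivOfSurjective]
      rw [← h1, LinearEquiv.symm_apply_apply]
    have hmem : ∀ y : F, ψ y - χ' (f y) ∈ A := by
      intro y
      rw [← Submodule.Quotient.mk_eq_zero A]
      have h2 : A.mkQ (χ' (f y)) = χ (f y) := LinearMap.congr_fun hχ' (f y)
      have h3 : χ (f y) = A.mkQ (ψ y) := by
        rw [hχdef]
        simp only [LinearMap.comp_apply, LinearEquiv.coe_toLinearMap, hekey y]
        exact Submodule.liftQ_apply _ _ _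
      have h4 : A.mkQ (ψ y - χ' (f y)) = 0 := by rw [map_sub, h2, h3, sub_self]
      simpa using h4
    refine ⟨LinearMap.codRestrict A ((ψ : F →ₗ[R] B) - χ' ∘ₗ f.hom)
      (fun y => hmem y), fun x => ?_⟩
    apply Subtype.ext
    show ψ x.1 - χ' (f.hom x.1) = A.subtype (φ x)
    have hx0 : f.hom x.1 = 0 := x.2
    rw [hx0, map_zero, sub_zero]
    exact hψ x
  refine ⟨part1, fun B A hBinj hpure => ?_⟩
  apply part1 B A ?_ hpure
  intro U hU hUpres
  obtain ⟨n', hn'⟩ : ∃ n', n = n' + 1 := ⟨n - 1, (Nat.succ_pred_eq_of_pos hn).symm⟩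
  subst hn'
  obtain ⟨K, F, f, _, _, hchar⟩ := main_ext_char n' U hUpres
  rw [hchar B]
  intro φ
  obtain ⟨ψ, hψ⟩ := hBinj.out (LinearMap.ker f.hom).subtype
    (Submodule.injective_subtype _) φ
  exact ⟨ψ, fun x => hψ x⟩
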